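/- Let A(m,l) = l + l^{-1} + (-m^{-4} + m^{-2} + 2 + m^2 - m^4), viewed as a Laurent polynomial on (ℂ*)^2. Then A(m,l) = 0 holds whenever l = -m^{-2}(y-3)(y-1)^2 - m^{-4}(y^2 - 3y + 1) and (y-1)(m^2 + m^{-2}) + y^2 - 3y + 3 = 0 for some y ∈ ℂ. -/
import Mathlib


theorem fig8_longitude_satisfies_A_polynomial
    (y m : ℂ) (hm : m ≠ 0)
    (hf : (y - 1) * (m ^ 2 + m⁻¹ ^ 2) + y ^ 2 - 3 * y + 3 = 0)
    (l : ℂ)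
    (hl : l = -m⁻¹ ^ 2 * (y - 3) * (y - 1) ^ 2 - m⁻¹ ^ 4 * (y ^ 2 - 3 * y + 1)) :
    l + l⁻¹ + (-m⁻¹ ^ 4 + m⁻¹ ^ 2 + 2 + m ^ 2 - m ^ 4) = 0 := by
  have hu : m * m⁻¹ = 1 := mul_inv_cancel₀ hm
  set L2 : ℂ := -m ^ 2 * (y - 3) * (y - 1) ^ 2 - m ^ 4 * (y ^ 2 - 3 * y + 1) with hL2
  have h1 : l * L2 = 1 := by
    rw [hl, hL2]
    linear_combination (y ^ 4 - 7 * y ^ 3 + 16 * y ^ 2 - 13 * y + 3) * hf +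
      (10 + -3 * m⁻¹ ^ 2 + 10 * m * m⁻¹ + -3 * m * m⁻¹ ^ 3 + -3 * m ^ 2 + 1 * m ^ 2 * m⁻¹ ^ 2 + -3 * m ^ 3 * m⁻¹ + 1 * m ^ 3 * m⁻¹ ^ 3 + -48 * y + 16 * y * m⁻¹ ^ 2 + -48 * y * m * m⁻¹ + 16 * y * m * m⁻¹ ^ 3 + 16 * y * m ^ 2 + -6 * y * m ^ 2 * m⁻¹ ^ 2 + 16 * y * m ^ 3 * m⁻¹ + -6 * y * m ^ 3 * m⁻¹ ^ 3 + 90 * y ^ 2 + -29 * y ^ 2 * m⁻¹ ^ 2 + 90 * y ^ 2 * m * m⁻¹ + -29 * y ^ 2 * m * m⁻¹ ^ 3 + -29 * y ^ 2 * m ^ 2 + 11 * y ^ 2 * m ^ 2 * m⁻¹ ^ 2 + -29 * y ^ 2 * m ^ 3 * m⁻¹ + 11 * y ^ 2 * m ^ 3 * m⁻¹ ^ 3 + -82 * y ^ 3 + 23 * y ^ 3 * m⁻¹ ^ 2 + -82 * y ^ 3 * m * m⁻¹ + 23 * y ^ 3 * m * m⁻¹ ^ 3 + 23 * y ^ 3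 * m ^ 2 + -6 * y ^ 3 * m ^ 2 * m⁻¹ ^ 2 + 23 * y ^ 3 * m ^ 3 * m⁻¹ + -6 * y ^ 3 * m ^ 3 * m⁻¹ ^ 3 + 40 * y ^ 4 + -8 * y ^ 4 * m⁻¹ ^ 2 + 40 * y ^ 4 * m * m⁻¹ + -8 * y ^ 4 * m * m⁻¹ ^ 3 + -8 * y ^ 4 * m ^ 2 + 1 * y ^ 4 * m ^ 2 * m⁻¹ ^ 2 + -8 * y ^ 4 * m ^ 3 * m⁻¹ + 1 * y ^ 4 * m ^ 3 * m⁻¹ ^ 3 + -10 * y ^ 5 + 1 * y ^ 5 * m⁻¹ ^ 2 + -10 * y ^ 5 * m * m⁻¹ + 1 * y ^ 5 * m * m⁻¹ ^ 3 + 1 * y ^ 5 * m ^ 2 + 1 * y ^ 5 * m ^ 3 * m⁻¹ + 1 * y ^ 6 + 1 * y ^ 6 * m * m⁻¹) * hu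
  have h2 : l⁻¹ = L2 := inv_eq_of_mul_eq_one_right h1
  rw [h2]
  rw [hl, hL2]
  linear_combination ((2 - y) * (m ^ 2 + m⁻¹ ^ 2) + 2) * hf +
    (4 + 4 * m * m⁻¹ + -6 * y + -6 * y * m * m⁻¹ + 2 * y ^ 2 + 2 * y ^ 2 * m * m⁻¹) * hu
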